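/- With Bob's unitary U_B(θ,k) = cos(θ)I + i k sin(θ)(I⊗σ_y) applied after Alice's measurement on the thermal state, the energy change satisfies E_B − E_A = p(1 − cos 2θ) − q sin 2θ, where p = (B sinh(βB) + α sinh(βα))/Z and q = (B sinh(βα) − α sinh(βB))/Z; its minimum over θ is p − √(p²+q²), which is strictly negative whenever q ≠ 0. -/

import Mathlib

open Matrix
open scoped Kronecker

noncomputable section

/-- Pauli matrices -/
def σx : Matrix (Fin 2) (Fin 2) ℂ := !![0, 1; 1, 0]
def σy : Matrix (Fin 2) (Fin 2) ℂ := !![0, -Complex.I; Complex.I, 0]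
def σz : Matrix (Fin 2) (Fin 2) ℂ := !![1, 0; 0, -1]

/-- Raising and lowering operators σ± = (σx ± i σy)/2 -/
def σp : Matrix (Fin 2) (Fin 2) ℂ := (2 : ℂ)⁻¹ • (σx + Complex.I • σy)
def σm : Matrix (Fin 2) (Fin 2) ℂ := (2 : ℂ)⁻¹ • (σx - Complex.I • σy)

/-- XY Hamiltonian H = (B/2)(σz⊗I + I⊗σz) + α(σ₊⊗σ₋ + σ₋⊗σ₊) -/
def Ham (B α : ℝ) : Matrix (Fin 2 × Fin 2) (Fin 2 × Fin 2) ℂ :=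
  ((B : ℂ) / 2) • (σz ⊗ₖ (1 : Matrix (Fin 2) (Fin 2) ℂ) + (1 : Matrix (Fin 2) (Fin 2) ℂ) ⊗ₖ σz)
    + (α : ℂ) • (σp ⊗ₖ σm + σm ⊗ₖ σp)

/-- Standard basis kets -/
def ket (a : Fin 2) : Fin 2 → ℂ := fun i => if i = a then 1 else 0
def ket2 (a b : Fin 2) : Fin 2 × Fin 2 → ℂ := fun p => ket a p.1 * ket b p.2

/-- Bell states (|01⟩ ± |10⟩)/√2 -/
def ψplus : Fin 2 × Fin 2 → ℂ := ((Real.sqrt 2 : ℂ))⁻¹ • (ket2 0 1 + ket2 1 0)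
def ψminus : Fin 2 × Fin 2 → ℂ := ((Real.sqrt 2 : ℂ))⁻¹ • (ket2 0 1 - ket2 1 0)

/-- Alice's measurement operators M_A(k) = ((I + k σx)/2) ⊗ I -/
def MA (k : ℝ) : Matrix (Fin 2 × Fin 2) (Fin 2 × Fin 2) ℂ :=
  ((2 : ℂ)⁻¹ • ((1 : Matrix (Fin 2) (Fin 2) ℂ) + (k : ℂ) • σx)) ⊗ₖ (1 : Matrix (Fin 2) (Fin 2) ℂ)

/-- Partition function Z = 2(cosh βα + cosh βB) -/
def Zf (β B α : ℝ) : ℝ := 2 * (Real.cosh (β * α) + Real.cosh (β * B))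

/-- Thermal state ρ = e^{-βH}/Z -/
def ρth (β B α : ℝ) : Matrix (Fin 2 × Fin 2) (Fin 2 × Fin 2) ℂ :=
  ((Zf β B α : ℂ))⁻¹ • NormedSpace.exp ((-(β : ℂ)) • Ham B α)

/-- Bob's local unitary U_B(θ,k) = cos θ · I + i k sin θ (I⊗σy) -/
def UB (θ k : ℝ) : Matrix (Fin 2 × Fin 2) (Fin 2 × Fin 2) ℂ :=
  (Real.cos θ : ℂ) • (1 : Matrix (Fin 2 × Fin 2) (Fin 2 × Fin 2) ℂ)
    + (Complex.I * k * Real.sin θ) • ((1 : Matrix (Fin 2) (Fin 2) ℂ) ⊗ₖ σy)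

end

noncomputable section

/-- Explicit value of exp(-βH). -/
def Eb (β B α : ℝ) : Matrix (Fin 2 × Fin 2) (Fin 2 × Fin 2) ℂ := fun p q =>
  if p = (0,0) ∧ q = (0,0) then (Real.exp (-(β*B)) : ℂ)
  else if p = (1,1) ∧ q = (1,1) then (Real.exp (β*B) : ℂ)
  else if p = (0,1) ∧ q = (0,1) then (Real.cosh (β*α) : ℂ)
  else if p = (1,0) ∧ q = (1,0) then (Real.cosh (β*α) : ℂ)
  else if p = (0,1) ∧ q = (1,0) then (-(Real.sinh (β*α) : ℂ))
  else if p = (1,0) ∧ q = (0,1) then (-(Real.sinh (β*α) : ℂ))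
  else 0

def dvec (β B : ℝ) : Fin 2 × Fin 2 → ℂ := fun p =>
  if p = (0,0) then ((-(β*B) : ℝ) : ℂ) else if p = (1,1) then ((β*B : ℝ) : ℂ) else 0

def nvec (β α : ℝ) : Fin 2 × Fin 2 → ℂ := fun p =>
  if p = (0,1) then ((-(β*α) : ℝ) : ℂ) else if p = (1,0) then ((β*α : ℝ) : ℂ) else 0

def Nm (β α : ℝ) : Matrix (Fin 2 × Fin 2) (Fin 2 × Fin 2) ℂ := fun p q =>
  if p = (0,1) ∧ q = (1,0) then ((-(β*α) : ℝ) : ℂ)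
  else if p = (1,0) ∧ q = (0,1) then ((-(β*α) : ℝ) : ℂ) else 0

def Wm : Matrix (Fin 2 × Fin 2) (Fin 2 × Fin 2) ℂ := fun p q =>
  if p = (0,0) ∧ q = (0,0) then 1
  else if p = (1,1) ∧ q = (1,1) then 1
  else if p = (0,1) ∧ q = (0,1) then 1
  else if p = (0,1) ∧ q = (1,0) then 1
  else if p = (1,0) ∧ q = (0,1) then 1
  else if p = (1,0) ∧ q = (1,0) then -1
  else 0

def Wi : Matrix (Fin 2 × Fin 2) (Fin 2 × Fin 2) ℂ := fun p q =>
  if p = (0,0) ∧ q = (0,0) then 1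
  else if p = (1,1) ∧ q = (1,1) then 1
  else if p = (0,1) ∧ q = (0,1) then 2⁻¹
  else if p = (0,1) ∧ q = (1,0) then 2⁻¹
  else if p = (1,0) ∧ q = (0,1) then 2⁻¹
  else if p = (1,0) ∧ q = (1,0) then -2⁻¹
  else 0

lemma ham_split (β B α : ℝ) :
    (-(β : ℂ)) • Ham B α = Matrix.diagonal (dvec β B) + Nm β α := by
  ext ⟨i,j⟩ ⟨k,l⟩
  fin_cases i <;> fin_cases j <;> fin_cases k <;> fin_cases l <;>
    simp [Ham, σp, σm, σx, σy, σz, dvec, Nm, Matrix.diagonal, Matrix.one_apply,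
      Matrix.kroneckerMap_apply, Matrix.add_apply, Matrix.smul_apply, Prod.ext_iff]
  any_goals (push_cast; ring)
  all_goals exact Or.inl trivial
lemma commute_DN (β B α : ℝ) : Commute (Matrix.diagonal (dvec β B)) (Nm β α) := by
  show _ * _ = _ * _
  ext ⟨i,j⟩ ⟨k,l⟩
  fin_cases i <;> fin_cases j <;> fin_cases k <;> fin_cases l <;>
    simp [Matrix.mul_apply, dvec, Nm, Matrix.diagonal, Fintype.sum_prod_type,
      Fin.sum_univ_succ, Prod.ext_iff]

lemma W_mul_Wi : Wm * Wi = 1 := by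
  ext ⟨i,j⟩ ⟨k,l⟩
  fin_cases i <;> fin_cases j <;> fin_cases k <;> fin_cases l <;>
    simp [Matrix.mul_apply, Wm, Wi, Matrix.one_apply, Fintype.sum_prod_type,
      Fin.sum_univ_succ, Prod.ext_iff] <;> norm_num

lemma Wi_mul_W : Wi * Wm = 1 := by
  ext ⟨i,j⟩ ⟨k,l⟩
  fin_cases i <;> fin_cases j <;> fin_cases k <;> fin_cases l <;>
    simp [Matrix.mul_apply, Wm, Wi, Matrix.one_apply, Fintype.sum_prod_type,
      Fin.sum_univ_succ, Prod.ext_iff] <;> norm_num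

lemma Nm_conj (β α : ℝ) : Nm β α = Wm * Matrix.diagonal (nvec β α) * Wi := by
  ext ⟨i,j⟩ ⟨k,l⟩
  fin_cases i <;> fin_cases j <;> fin_cases k <;> fin_cases l <;>
    simp [Matrix.mul_apply, Wm, Wi, Nm, nvec, Matrix.diagonal, Fintype.sum_prod_type,
      Fin.sum_univ_succ, Prod.ext_iff] <;> push_cast <;> ring
lemma exp_Ham (β B α : ℝ) :
    NormedSpace.exp ((-(β : ℂ)) • Ham B α) = Eb β B α := by
  rw [ham_split, Matrix.exp_add_of_commute _ _ (commute_DN β B α), Nm_conj]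
  have h1 : NormedSpace.exp (Matrix.diagonal (dvec β B))
      = Matrix.diagonal (fun i => Complex.exp (dvec β B i)) := by
    rw [Matrix.exp_diagonal, Pi.exp_def]
    simp [← Complex.exp_eq_exp_ℂ]
  have h2 : NormedSpace.exp (Wm * Matrix.diagonal (nvec β α) * Wi)
      = Wm * NormedSpace.exp (Matrix.diagonal (nvec β α)) * Wi :=
    Matrix.exp_units_conj ⟨Wm, Wi, W_mul_Wi, Wi_mul_W⟩ (Matrix.diagonal (nvec β α))
  rw [h2]; simp only [Matrix.exp_diagonal, Pi.exp_def]
  ext ⟨i,j⟩ ⟨k,l⟩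
  fin_cases i <;> fin_cases j <;> fin_cases k <;> fin_cases l <;>
    simp [Matrix.mul_apply, Wm, Wi, Eb, nvec, dvec, Matrix.diagonal, Fintype.sum_prod_type,
      Fin.sum_univ_succ, Prod.ext_iff, Real.cosh_eq, Real.sinh_eq, ← Complex.exp_eq_exp_ℂ] <;>
    push_cast <;> ring
lemma trA (β B α : ℝ) :
    (Ham B α * (MA 1 * Eb β B α * MA 1 + MA (-1) * Eb β B α * MA (-1))).trace
      = ((-(B * Real.sinh (β*B) + α * Real.sinh (β*α)) : ℝ) : ℂ) := by
  simp [Matrix.trace, Matrix.mul_apply, Fintype.sum_prod_type, Fin.sum_univ_succ,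
    Ham, σp, σm, σx, σy, σz, MA, Eb, Matrix.kroneckerMap_apply, Matrix.one_apply,
    Matrix.diag, Real.sinh_eq, Real.cosh_eq]
  push_cast
  ring
def Qk (β B α k : ℝ) : Matrix (Fin 2 × Fin 2) (Fin 2 × Fin 2) ℂ := fun p q =>
  (4:ℂ)⁻¹ * (((
  if p=(0,0)∧q=(0,0) then Real.exp (-(β*B)) + Real.cosh (β*α)
  else if p=(0,0)∧q=(0,1) then -(k * Real.sinh (β*α))
  else if p=(0,0)∧q=(1,0) then k*(Real.exp (-(β*B)) + Real.cosh (β*α))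
  else if p=(0,0)∧q=(1,1) then -Real.sinh (β*α)
  else if p=(0,1)∧q=(0,0) then -(k * Real.sinh (β*α))
  else if p=(0,1)∧q=(0,1) then Real.cosh (β*α) + Real.exp (β*B)
  else if p=(0,1)∧q=(1,0) then -Real.sinh (β*α)
  else if p=(0,1)∧q=(1,1) then k*(Real.cosh (β*α) + Real.exp (β*B))
  else if p=(1,0)∧q=(0,0) then k*(Real.exp (-(β*B)) + Real.cosh (β*α))
  else if p=(1,0)∧q=(0,1) then -Real.sinh (β*α)
  else if p=(1,0)∧q=(1,0) then Real.exp (-(β*B)) + Real.cosh (β*α)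
  else if p=(1,0)∧q=(1,1) then -(k * Real.sinh (β*α))
  else if p=(1,1)∧q=(0,0) then -Real.sinh (β*α)
  else if p=(1,1)∧q=(0,1) then k*(Real.cosh (β*α) + Real.exp (β*B))
  else if p=(1,1)∧q=(1,0) then -(k * Real.sinh (β*α))
  else Real.cosh (β*α) + Real.exp (β*B) : ℝ)) : ℂ)

set_option maxHeartbeats 2000000 in
lemma MA_Eb_MA (β B α : ℝ) (k : ℝ) (hk : k = 1 ∨ k = -1) :
    MA k * Eb β B α * MA k = Qk β B α k := by
  rcases hk with h | h <;> subst h <;>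
  · ext ⟨i,j⟩ ⟨k,l⟩
    fin_cases i <;> fin_cases j <;> fin_cases k <;> fin_cases l <;>
      simp [Matrix.mul_apply, Fintype.sum_prod_type, Fin.sum_univ_succ,
        MA, σx, Eb, Qk, Matrix.kroneckerMap_apply, Matrix.one_apply, Prod.ext_iff] <;>
      push_cast <;> ring
set_option maxHeartbeats 4000000 in
lemma trB (β B α θ : ℝ) (k : ℝ) (hk : k = 1 ∨ k = -1) :
    (Ham B α * (UB θ k * Qk β B α k * (UB θ k)ᴴ)).trace
      = ((2⁻¹ * (-(B * Real.sinh (β*B) + α * Real.sinh (β*α))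
            * (Real.cos θ ^ 2 - Real.sin θ ^ 2)
          - (B * Real.sinh (β*α) - α * Real.sinh (β*B))
            * (2 * Real.sin θ * Real.cos θ)) : ℝ) : ℂ) := by
  have h4 : Complex.I ^ 4 = 1 := by
    rw [show (4:ℕ) = 2*2 from rfl, pow_mul, Complex.I_sq]; norm_num
  rcases hk with h | h <;> subst h <;>
  · simp [Matrix.trace, Matrix.mul_apply, Fintype.sum_prod_type, Fin.sum_univ_succ,
      Ham, σp, σm, σx, σy, σz, UB, Qk, Matrix.kroneckerMap_apply, Matrix.one_apply,
      Matrix.diag, Matrix.conjTranspose_apply, Real.sinh_eq, Real.cosh_eq,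
      Prod.ext_iff, Complex.star_def, _root_.map_add, _root_.map_mul, _root_.map_neg, _root_.map_one, _root_.map_zero,
      Complex.conj_I, Complex.conj_ofReal]
    push_cast
    ring_nf
    simp only [Complex.I_sq, h4, ← Complex.cos_conj, ← Complex.sin_conj, Complex.conj_ofReal]
    ring

/-- With Bob's unitary U_B(θ,k) after Alice's measurement on the thermal state,
    E_B - E_A = p(1 - cos 2θ) - q sin 2θ with p = (B sinh βB + α sinh βα)/Z and
    q = (B sinh βα - α sinh βB)/Z; the minimum over θ is p - √(p²+q²) < 0 when q ≠ 0. -/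
theorem teleported_energy_thermal (β B α : ℝ) (hβ : 0 < β) (hB : 0 < B) (hα : 0 < α) :
    let Z : ℝ := Zf β B α
    let p : ℝ := (B * Real.sinh (β * B) + α * Real.sinh (β * α)) / Z
    let q : ℝ := (B * Real.sinh (β * α) - α * Real.sinh (β * B)) / Z
    let EA : ℂ := (Ham B α *
      (MA 1 * ρth β B α * MA 1 + MA (-1) * ρth β B α * MA (-1))).trace
    let EB : ℝ → ℂ := fun θ => (Ham B α *
      (UB θ 1 * MA 1 * ρth β B α * MA 1 * (UB θ 1)ᴴ
        + UB θ (-1) * MA (-1) * ρth β B α * MA (-1) * (UB θ (-1))ᴴ)).trace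
    (∀ θ : ℝ, EB θ - EA
        = ((p * (1 - Real.cos (2 * θ)) - q * Real.sin (2 * θ) : ℝ) : ℂ)) ∧
    IsLeast (Set.range fun θ : ℝ => p * (1 - Real.cos (2 * θ)) - q * Real.sin (2 * θ))
      (p - Real.sqrt (p ^ 2 + q ^ 2)) ∧
    (q ≠ 0 → p - Real.sqrt (p ^ 2 + q ^ 2) < 0) := by
  intro Z p q EA EB
  have hZpos : 0 < Z := by
    have h1 := Real.cosh_pos (x := β * α)
    have h2 := Real.cosh_pos (x := β * B)
    simp only [Z, Zf]; linarith
  have hZ : Z ≠ 0 := ne_of_gt hZpos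
  have hρ : ρth β B α = ((Z : ℝ) : ℂ)⁻¹ • Eb β B α := by
    rw [ρth, exp_Ham]
  refine ⟨?_, ?_, ?_⟩
  · -- energy difference formula
    intro θ
    have hEA : EA = ((Z : ℝ) : ℂ)⁻¹ *
        ((-(B * Real.sinh (β*B) + α * Real.sinh (β*α)) : ℝ) : ℂ) := by
      simp only [EA, hρ, Matrix.mul_smul, Matrix.smul_mul, Matrix.mul_add,
        Matrix.trace_add, Matrix.trace_smul, smul_eq_mul]
      rw [← trA β B α]
      simp only [Matrix.mul_add, Matrix.trace_add]
      ring
    have key : ∀ k : ℝ, k = 1 ∨ k = -1 →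
        (Ham B α * (UB θ k * MA k * ρth β B α * MA k * (UB θ k)ᴴ)).trace
          = ((Z : ℝ) : ℂ)⁻¹ *
        ((2⁻¹ * (-(B * Real.sinh (β*B) + α * Real.sinh (β*α))
            * (Real.cos θ ^ 2 - Real.sin θ ^ 2)
          - (B * Real.sinh (β*α) - α * Real.sinh (β*B))
            * (2 * Real.sin θ * Real.cos θ)) : ℝ) : ℂ) := by
      intro k hk
      rw [hρ]
      rw [show UB θ k * MA k * (((Z : ℝ) : ℂ)⁻¹ • Eb β B α) * MA k * (UB θ k)ᴴ
          = ((Z : ℝ) : ℂ)⁻¹ • (UB θ k * (MA k * Eb β B α * MA k) * (UB θ k)ᴴ) by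
        simp only [Matrix.mul_smul, Matrix.smul_mul]
        rw [mul_assoc (UB θ k) (MA k) (Eb β B α), mul_assoc (UB θ k) _ (MA k)]]
      rw [MA_Eb_MA β B α k hk]
      rw [Matrix.mul_smul, Matrix.trace_smul, trB β B α θ k hk, smul_eq_mul]
    have hEB : EB θ - EA = ((Z : ℝ) : ℂ)⁻¹ *
        ((-(B * Real.sinh (β*B) + α * Real.sinh (β*α))
            * (Real.cos θ ^ 2 - Real.sin θ ^ 2)
          - (B * Real.sinh (β*α) - α * Real.sinh (β*B))
            * (2 * Real.sin θ * Real.cos θ)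
          + (B * Real.sinh (β*B) + α * Real.sinh (β*α)) : ℝ) : ℂ) := by
      simp only [EB, Matrix.mul_add, Matrix.trace_add]
      rw [key 1 (Or.inl rfl), key (-1) (Or.inr rfl), hEA]
      push_cast
      ring
    rw [hEB]
    rw [show ((Z:ℝ):ℂ)⁻¹ = (((Z⁻¹ : ℝ)) : ℂ) by push_cast; ring]
    rw [← Complex.ofReal_mul, Complex.ofReal_inj]
    simp only [p, q]
    rw [Real.cos_two_mul', Real.sin_two_mul]
    field_simp
    ring
  · -- IsLeast
    set r : ℝ := Real.sqrt (p ^ 2 + q ^ 2) with hr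
    have hrnn : 0 ≤ r := Real.sqrt_nonneg _
    have hr2 : r ^ 2 = p ^ 2 + q ^ 2 := Real.sq_sqrt (by positivity)
    constructor
    · -- membership
      rcases eq_or_lt_of_le hrnn with h0 | hpos
      · -- r = 0 hence p = q = 0
        have hpq : p = 0 ∧ q = 0 := by
          constructor <;> nlinarith [sq_nonneg p, sq_nonneg q]
        exact ⟨0, by simp [hpq.1, hpq.2, ← h0]⟩
      · have hz : (Complex.ofReal p + Complex.ofReal q * Complex.I) ≠ 0 := by
          intro h
          have hre : p = 0 ∧ q = 0 := by
            constructor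
            · simpa using congrArg Complex.re h
            · simpa using congrArg Complex.im h
          rw [hr, hre.1, hre.2] at hpos
          simp at hpos
        set z : ℂ := Complex.ofReal p + Complex.ofReal q * Complex.I with hzdef
        have habs : ‖z‖ = r := by
          simp [hzdef, Complex.norm_def, Complex.normSq_apply, hr]
          ring_nf
        have hcos : Real.cos (Complex.arg z) = p / r := by
          rw [Complex.cos_arg hz, habs]; simp [hzdef]
        have hsin : Real.sin (Complex.arg z) = q / r := by
          rw [Complex.sin_arg, habs]; simp [hzdef]
        refine ⟨Complex.arg z / 2, ?_⟩
        have harg : 2 * (Complex.arg z / 2) = Complex.arg z := by ring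
        simp only [harg, hcos, hsin]
        field_simp
        nlinarith [hr2]
    · -- lower bound
      rintro x ⟨θ, rfl⟩
      show p - r ≤ p * (1 - Real.cos (2 * θ)) - q * Real.sin (2 * θ)
      have hcs := Real.sin_sq_add_cos_sq (2 * θ)
      nlinarith [sq_nonneg (p * Real.sin (2*θ) - q * Real.cos (2*θ)),
        sq_nonneg (r - (p * Real.cos (2*θ) + q * Real.sin (2*θ))), hr2, hrnn]
  · -- strict negativity
    intro hq
    have h1 : p ≤ Real.sqrt (p ^ 2) := by
      rw [Real.sqrt_sq_eq_abs]; exact le_abs_self p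
    have h2 : Real.sqrt (p ^ 2) < Real.sqrt (p ^ 2 + q ^ 2) := by
      apply Real.sqrt_lt_sqrt (sq_nonneg p)
      nlinarith [sq_nonneg q, sq_abs q, abs_pos.mpr hq]
    linarith

end
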